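/- Let F be a standard Borel space and let μ be a measure on F such that μ(F) < ∞, μ(A) is a natural number for every measurable A ⊆ F, and μ({x}) ≤ 1 for every x ∈ F. Then there is a unique finite set S ⊆ F (an element of Finset F) such that μ = ∑_{x∈S} δ_x, i.e. μ = ι(S). -/
import Mathlib

open MeasureTheory Set
open scoped ENNReal

lemma iota_aux {F : Type*} [MeasurableSpace F] [MeasurableSingletonClass F]
    [DecidableEq F] (S : Finset F) (x : F) :
    (∑ y ∈ S, Measure.dirac y : Measure F) {x} = if x ∈ S then 1 else 0 := by
  classical
  rw [Measure.coe_finset_sum, Finset.sum_apply]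
  have h : ∀ y ∈ S, (Measure.dirac y : Measure F) {x} = if y = x then 1 else 0 := by
    intro y _
    rw [Measure.dirac_apply' y (measurableSet_singleton x)]
    simp [Set.indicator]
  rw [Finset.sum_congr rfl h, Finset.sum_ite_eq' S x (fun _ => 1)]

lemma exists_atom_real (ν : Measure ℝ)
    (hnat : ∀ A : Set ℝ, MeasurableSet A → ∃ n : ℕ, ν A = n)
    (hfin : ν Set.univ < ⊤) (h1 : 1 ≤ ν Set.univ) :
    ∃ x : ℝ, 1 ≤ ν {x} := by
  have hfin' : ∀ B : Set ℝ, ν B ≠ ⊤ :=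
    fun B => (lt_of_le_of_lt (measure_mono (subset_univ _)) hfin).ne
  have hz : ∀ A : Set ℝ, MeasurableSet A → ν A < 1 → ν A = 0 := by
    intro A hA hlt
    obtain ⟨n, hn⟩ := hnat A hA
    rw [hn] at hlt ⊢
    have : n < 1 := by exact_mod_cast hlt
    simp [Nat.lt_one_iff.mp this]
  have hz' : ∀ A : Set ℝ, MeasurableSet A → ν A ≠ 0 → 1 ≤ ν A := by
    intro A hA h0
    by_contra hc
    exact h0 (hz A hA (lt_of_not_ge hc))
  set A : Set ℝ := {t : ℝ | 1 ≤ ν (Iic t)} with hA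
  have hmono : ∀ s t : ℝ, s ≤ t → ν (Iic s) ≤ ν (Iic t) := fun s t h =>
    measure_mono (Iic_subset_Iic.mpr h)
  -- A nonempty
  have hAne : A.Nonempty := by
    by_contra hne
    rw [Set.not_nonempty_iff_eq_empty] at hne
    have hall : ∀ m : ℕ, ν (Iic (m : ℝ)) = 0 := by
      intro m
      have hm : (m:ℝ) ∉ A := by rw [hne]; exact notMem_empty _
      exact hz _ measurableSet_Iic (lt_of_not_ge hm)
    have hu : (⋃ m : ℕ, Iic (m : ℝ)) = univ := by
      ext t; simp only [mem_iUnion, mem_Iic, mem_univ, iff_true]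
      exact exists_nat_ge t
    have h0 := measure_iUnion_null_iff.mpr hall
    rw [hu] at h0
    rw [h0] at h1
    simp at h1
  -- A bounded below
  have hbdd : BddBelow A := by
    have hempty : (⋂ m : ℕ, Iic (-(m : ℝ))) = (∅ : Set ℝ) := by
      ext t; simp only [mem_iInter, mem_Iic, mem_empty_iff_false, iff_false]
      push_neg
      obtain ⟨m, hm⟩ := exists_nat_gt (-t)
      exact ⟨m, by linarith⟩
    have hdir : Directed (· ⊇ ·) (fun m : ℕ => Iic (-(m : ℝ))) := by
      intro i j
      refine ⟨max i j, Iic_subset_Iic.mpr (by push_cast; simp), Iic_subset_Iic.mpr (by push_cast; simp)⟩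
    have hinf := Directed.measure_iInter (μ := ν)
      (fun i => measurableSet_Iic.nullMeasurableSet) hdir ⟨0, hfin' _⟩
    rw [hempty, measure_empty] at hinf
    have hex : ∃ m : ℕ, ν (Iic (-(m : ℝ))) < 1 := by
      by_contra hc
      push_neg at hc
      have := le_iInf hc
      rw [← hinf] at this
      simp at this
    obtain ⟨m, hm⟩ := hex
    refine ⟨-(m:ℝ), fun t ht => ?_⟩
    by_contra hlt
    push_neg at hlt
    have h0 : ν (Iic t) = 0 := hz _ measurableSet_Iic
      (lt_of_le_of_lt (hmono t _ hlt.le) hm)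
    rw [hA] at ht
    simp only [mem_setOf_eq, h0] at ht
    simp at ht
  set x := sInf A with hx
  have hIio : ν (Iio x) = 0 := by
    have hu : Iio x = ⋃ n : ℕ, Iic (x - 1/(n+1)) := by
      ext t
      simp only [mem_Iio, mem_iUnion, mem_Iic]
      constructor
      · intro ht
        obtain ⟨n, hn⟩ := exists_nat_one_div_lt (sub_pos.mpr ht)
        exact ⟨n, by push_cast at hn ⊢; linarith⟩
      · rintro ⟨n, hn⟩
        have : (0:ℝ) < 1/(n+1) := by positivity
        linarith
    rw [hu]
    refine measure_iUnion_null fun n => hz _ measurableSet_Iic ?_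
    by_contra hc
    push_neg at hc
    have hmem : x - 1/(n+1) ∈ A := hc
    have hle := csInf_le hbdd hmem
    have hp : (0:ℝ) < 1/(n+1:ℝ) := by positivity
    rw [← hx] at hle
    linarith
  have hIic : 1 ≤ ν (Iic x) := by
    have hu : Iic x = ⋂ n : ℕ, Iic (x + 1/(n+1)) := by
      ext t
      simp only [mem_Iic, mem_iInter]
      constructor
      · intro ht n
        have : (0:ℝ) < 1/(n+1) := by positivity
        linarith
      · intro h
        by_contra hc
        push_neg at hc
        obtain ⟨n, hn⟩ := exists_nat_one_div_lt (sub_pos.mpr hc)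
        have := h n
        push_cast at hn
        linarith
    have key : ∀ i j : ℕ, i ≤ j → x + 1/(j+1:ℝ) ≤ x + 1/(i+1:ℝ) := by
      intro i j hij
      have : 1/(j+1:ℝ) ≤ 1/(i+1:ℝ) := by
        apply one_div_le_one_div_of_le
        · positivity
        · exact_mod_cast by omega
      linarith
    have hdir : Directed (· ⊇ ·) (fun n : ℕ => Iic (x + 1/(n+1:ℝ))) := by
      intro i j
      exact ⟨max i j, Iic_subset_Iic.mpr (key _ _ (le_max_left _ _)),
        Iic_subset_Iic.mpr (key _ _ (le_max_right _ _))⟩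
    rw [hu, Directed.measure_iInter (fun i => measurableSet_Iic.nullMeasurableSet) hdir
      ⟨0, hfin' _⟩]
    refine le_iInf fun n => ?_
    have hnlb : (x + 1/(n+1:ℝ)) ∉ lowerBounds A := by
      intro h
      have hle := le_csInf hAne h
      have hp : (0:ℝ) < 1/(n+1:ℝ) := by positivity
      rw [← hx] at hle
      linarith
    simp only [lowerBounds, mem_setOf_eq, not_forall] at hnlb
    obtain ⟨t, ht, hlt⟩ := hnlb
    push_neg at hlt
    exact le_trans ht (hmono t _ hlt.le)
  refine ⟨x, ?_⟩
  have hsplit : ν (Iic x) ≤ ν (Iio x) + ν {x} := by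
    rw [← Iio_union_right]
    exact measure_union_le _ _
  rw [hIio, zero_add] at hsplit
  exact le_trans hIic hsplit

lemma exists_atom_sb {F : Type*} [MeasurableSpace F] [StandardBorelSpace F] (μ : Measure F)
    (hnat : ∀ A : Set F, MeasurableSet A → ∃ n : ℕ, μ A = n)
    (hfin : μ Set.univ < ⊤) (h1 : 1 ≤ μ Set.univ) :
    ∃ y : F, 1 ≤ μ {y} := by
  obtain ⟨f, hf⟩ := exists_measurableEmbedding_real (α := F)
  set ν := Measure.map f μ with hν
  have happ : ∀ A : Set ℝ, MeasurableSet A → ν A = μ (f ⁻¹' A) := fun A hA =>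
    Measure.map_apply hf.measurable hA
  have hnat' : ∀ A : Set ℝ, MeasurableSet A → ∃ n : ℕ, ν A = n := by
    intro A hA
    rw [happ A hA]
    exact hnat _ (hf.measurable hA)
  have hu : ν Set.univ = μ Set.univ := by
    rw [happ _ MeasurableSet.univ]; simp
  obtain ⟨x, hx⟩ := exists_atom_real ν hnat' (by rwa [hu]) (by rwa [hu])
  rw [happ _ (measurableSet_singleton x)] at hx
  rcases Set.eq_empty_or_nonempty (f ⁻¹' {x}) with he | ⟨y, hy⟩
  · rw [he] at hx; simp at hx
  · refine ⟨y, le_trans hx (measure_mono ?_)⟩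
    intro z hz
    simp only [Set.mem_preimage, Set.mem_singleton_iff] at hz hy ⊢
    exact hf.injective (by rw [hz, hy])

lemma exists_finset_rep {F : Type*} [MeasurableSpace F] [StandardBorelSpace F] :
    ∀ (n : ℕ) (μ : Measure F), μ Set.univ = n →
    (∀ A : Set F, MeasurableSet A → ∃ m : ℕ, μ A = m) →
    (∀ x : F, μ {x} ≤ 1) → ∃ S : Finset F, μ = ∑ x ∈ S, Measure.dirac x := by
  intro n
  induction n with
  | zero =>
    intro μ hu _ _
    refine ⟨∅, ?_⟩
    rw [Finset.sum_empty]
    exact Measure.measure_univ_eq_zero.mp (by simpa using hu)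
  | succ n ih =>
    classical
    intro μ hu hnat hpt
    have hfin : μ Set.univ < ⊤ := by rw [hu]; exact ENNReal.natCast_lt_top _
    have h1 : 1 ≤ μ Set.univ := by
      rw [hu]; exact_mod_cast Nat.one_le_iff_ne_zero.mpr (Nat.succ_ne_zero n)
    obtain ⟨x, hx⟩ := exists_atom_sb μ hnat hfin h1
    have hx1 : μ {x} = 1 := le_antisymm (hpt x) hx
    set μ' := μ.restrict {x}ᶜ with hμ'
    have hres : ∀ A : Set F, MeasurableSet A → μ' A = μ (A ∩ {x}ᶜ) := fun A hA =>
      Measure.restrict_apply hA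
    have hu' : μ' Set.univ = n := by
      have hsum : μ {x} + μ {x}ᶜ = μ Set.univ :=
        measure_add_measure_compl (measurableSet_singleton x)
      rw [hx1, hu] at hsum
      have : (1:ℝ≥0∞) + μ {x}ᶜ = 1 + n := by rw [hsum]; push_cast; ring
      have h2 := (ENNReal.add_right_inj ENNReal.one_ne_top).mp this
      rw [hres _ MeasurableSet.univ, Set.univ_inter, h2]
    have hnat' : ∀ A : Set F, MeasurableSet A → ∃ m : ℕ, μ' A = m := by
      intro A hA
      rw [hres A hA]
      exact hnat _ (hA.inter (measurableSet_singleton x).compl)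
    have hpt' : ∀ y : F, μ' {y} ≤ 1 := fun y =>
      le_trans (Measure.restrict_apply_le _ _) (hpt y)
    obtain ⟨S, hS⟩ := ih μ' hu' hnat' hpt'
    have hxS : x ∉ S := by
      intro hmem
      have h0 : μ' {x} = 0 := by
        rw [hres _ (measurableSet_singleton x)]
        simp
      rw [hS, iota_aux (F := F) S x, if_pos hmem] at h0
      simp at h0
    refine ⟨insert x S, ?_⟩
    rw [Finset.sum_insert hxS, ← hS]
    ext A hA
    have hdec : μ A = μ (A ∩ {x}) + μ (A ∩ {x}ᶜ) := by
      rw [← measure_inter_add_diff A (measurableSet_singleton x)]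
      congr 1
    rw [Measure.add_apply, hres A hA, hdec]
    congr 1
    by_cases hxA : x ∈ A
    · have : A ∩ {x} = {x} := by
        ext z; simp only [Set.mem_inter_iff, Set.mem_singleton_iff]
        exact ⟨fun h => h.2, fun h => ⟨h ▸ hxA, h⟩⟩
      rw [this, hx1, Measure.dirac_apply' _ hA]
      simp [hxA]
    · have : A ∩ {x} = ∅ := by
        ext z; simp only [Set.mem_inter_iff, Set.mem_singleton_iff, Set.mem_empty_iff_false,
          iff_false, not_and]
        rintro hz rfl; exact hxA hz
      rw [this, measure_empty, Measure.dirac_apply' _ hA]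
      simp [hxA]

/-- The canonical embedding of a database instance (a finite set of facts)
into the space of measures: `S ↦ ∑_{x ∈ S} δ_x`. -/
noncomputable def iota {F : Type*} [MeasurableSpace F] (S : Finset F) : Measure F :=
  ∑ x ∈ S, Measure.dirac x

/-- A finite measure on a standard Borel space `F` which takes only natural-number
values on measurable sets and whose point masses are at most `1` is `ι S` for a
unique finite set `S ⊆ F`. -/
theorem exists_unique_finset_of_natValued_measure (F : Type*) [MeasurableSpace F]
    [StandardBorelSpace F] (μ : Measure F)
    (hfin : μ Set.univ < ⊤)
    (hnat : ∀ A : Set F, MeasurableSet A → ∃ n : ℕ, μ A = n)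
    (hpt : ∀ x : F, μ {x} ≤ 1) :
    ∃! S : Finset F, μ = iota S := by
  classical
  obtain ⟨n, hn⟩ := hnat Set.univ MeasurableSet.univ
  obtain ⟨S, hS⟩ := exists_finset_rep n μ hn hnat hpt
  refine ⟨S, hS, ?_⟩
  intro T hT
  apply Finset.ext
  intro x
  have h1 : (∑ y ∈ T, Measure.dirac y : Measure F) {x}
      = (∑ y ∈ S, Measure.dirac y : Measure F) {x} := by
    rw [show (∑ y ∈ T, Measure.dirac y : Measure F) = μ from (hT.trans rfl).symm, hS]
  rw [iota_aux, iota_aux] at h1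
  by_cases hxT : x ∈ T <;> by_cases hxS : x ∈ S <;> simp [hxT, hxS] at h1 ⊢
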